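/- arXiv:1404.1531 — 2 statements merged into one kernel-verified Lean document; each statement's English description precedes it below -/
import Mathlib

section
/- Skolem satisfiability characterizes ordinary satisfiability of a prenex formula: a structure M with assignment α satisfies a formula of the form Qψ, where Q is a quantification prefix, if and only if there exists a Skolem map s for Q over the domain of M such that M, α' ⊨ ψ for every extension α' of α whose restriction to the variables of Q lies in the range of s. -/
/-- A quantification prefix is a list of quantifications: `(true, v)` stands
for `∃ v` and `(false, v)` for `∀ v`. -/
abbrev QPrefix (V : Type*) := List (Bool × V)

/-- Tarskian evaluation of a prenex formula `Q ψ`, where the matrix `ψ` is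
given semantically as a predicate `S` on (total) assignments. -/
def evalPrefix {V D : Type*} [DecidableEq V] (S : (V → D) → Prop) :
    QPrefix V → (V → D) → Prop
  | [], α => S α
  | (true, x) :: Q, α => ∃ d : D, evalPrefix S Q (Function.update α x d)
  | (false, x) :: Q, α => ∀ d : D, evalPrefix S Q (Function.update α x d)

/-- `Dep Q u v`: the universal variable `u` occurs before the existential
variable `v` in the prefix `Q` (functional dependence). -/
def Dep {V : Type*} (Q : QPrefix V) (u v : V) : Prop :=
  ∃ l₁ l₂ l₃ : QPrefix V, Q = l₁ ++ (false, u) :: l₂ ++ (true, v) :: l₃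

/-- `s` is a Skolem map for the prefix `Q` over `D`: it is the identity on
universal variables and the value of each existential variable depends only on
the universal variables it functionally depends upon. -/
def IsSkolemMap {V D : Type*} (Q : QPrefix V) (s : (V → D) → (V → D)) : Prop :=
  (∀ α : V → D, ∀ x, (false, x) ∈ Q → s α x = α x) ∧
  (∀ α₁ α₂ : V → D, ∀ x, (true, x) ∈ Q →
    (∀ u, Dep Q u x → α₁ u = α₂ u) → s α₁ x = s α₂ x)

lemma dep_mem {V : Type*} {Q : QPrefix V} {u v : V} (h : Dep Q u v) : (true, v) ∈ Q := by
  obtain ⟨l₁, l₂, l₃, rfl⟩ := h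
  simp

lemma dep_cons_true {V : Type*} {Q : QPrefix V} {x u v : V} :
    Dep ((true, x) :: Q) u v ↔ Dep Q u v := by
  constructor
  · rintro ⟨l₁, l₂, l₃, h⟩
    cases l₁ with
    | nil => simp at h
    | cons a l₁ =>
      rw [List.cons_append] at h
      exact ⟨l₁, l₂, l₃, (List.cons.injEq _ _ _ _ ▸ h).2⟩
  · rintro ⟨l₁, l₂, l₃, rfl⟩
    exact ⟨(true, x) :: l₁, l₂, l₃, rfl⟩

lemma dep_cons_false {V : Type*} {Q : QPrefix V} {x u v : V} :
    Dep ((false, x) :: Q) u v ↔ (u = x ∧ (true, v) ∈ Q) ∨ Dep Q u v := by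
  constructor
  · rintro ⟨l₁, l₂, l₃, h⟩
    cases l₁ with
    | nil =>
      simp only [List.nil_append, List.cons.injEq, Prod.mk.injEq] at h
      obtain ⟨⟨-, rfl⟩, rfl⟩ := h
      exact Or.inl ⟨rfl, by simp⟩
    | cons a l₁ =>
      rw [List.cons_append] at h
      exact Or.inr ⟨l₁, l₂, l₃, (List.cons.injEq _ _ _ _ ▸ h).2⟩
  · rintro (⟨rfl, hm⟩ | ⟨l₁, l₂, l₃, rfl⟩)
    · obtain ⟨l₂, l₃, rfl⟩ := List.append_of_mem hm
      exact ⟨[], l₂, l₃, rfl⟩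
    · exact ⟨(false, x) :: l₁, l₂, l₃, rfl⟩

/-- Skolem satisfiability characterizes ordinary satisfiability of a prenex
formula `Q ψ`. -/
theorem stmt_6 {V D : Type*} [DecidableEq V] [Nonempty D]
    (Q : QPrefix V) (hnodup : (Q.map Prod.snd).Nodup)
    (S : (V → D) → Prop) (α : V → D) :
    evalPrefix S Q α ↔
      ∃ s : (V → D) → (V → D), IsSkolemMap Q s ∧
        ∀ α' : V → D,
          (∀ x, (∀ b, (b, x) ∉ Q) → α' x = α x) →
          (∃ α₀ : V → D, ∀ b x, (b, x) ∈ Q → α' x = s α₀ x) →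
          S α' := by
  induction Q generalizing α with
  | nil =>
    constructor
    · intro hS
      refine ⟨id, ⟨fun _ _ h => absurd h (List.not_mem_nil),
        fun _ _ _ h => absurd h (List.not_mem_nil)⟩, ?_⟩
      intro α' h1 _
      have : α' = α := funext fun x => h1 x (fun b => List.not_mem_nil)
      rwa [this]
    · rintro ⟨s, -, hp⟩
      exact hp α (fun _ _ => rfl) ⟨α, fun b x h => absurd h (List.not_mem_nil)⟩
  | cons hd Q' ih =>
    obtain ⟨b, x⟩ := hd
    rw [List.map_cons, List.nodup_cons] at hnodup
    have hxQ : ∀ b', (b', x) ∉ Q' := fun b' h =>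
      hnodup.1 (List.mem_map.mpr ⟨(b', x), h, rfl⟩)
    have ih := fun (β : V → D) => ih hnodup.2 β
    cases b with
    | true =>
      constructor
      · rintro ⟨d, hd⟩
        obtain ⟨s', ⟨hs'u, hs'e⟩, hp'⟩ := (ih _).mp hd
        refine ⟨fun β => Function.update (s' (Function.update β x d)) x d, ⟨?_, ?_⟩, ?_⟩
        · intro β y hy
          rcases List.mem_cons.mp hy with h | h
          · simp at h
          · have hyx : y ≠ x := fun he => hxQ false (he ▸ h)
            simp only [Function.update_of_ne hyx]
            rw [hs'u _ y h, Function.update_of_ne hyx]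
        · intro β₁ β₂ y hy hag
          by_cases hyx : y = x
          · subst hyx; simp
          · have hyQ : (true, y) ∈ Q' := by
              rcases List.mem_cons.mp hy with h | h
              · exact absurd (Prod.mk.injEq .. ▸ h).2 hyx
              · exact h
            simp only [Function.update_of_ne hyx]
            refine hs'e _ _ y hyQ fun u hu => ?_
            by_cases hux : u = x
            · subst hux; simp
            · rw [Function.update_of_ne hux, Function.update_of_ne hux]
              exact hag u (dep_cons_true.mpr hu)
        · rintro α' h1 ⟨α₀, h2⟩
          have hα'x : α' x = d := by
            have := h2 true x (List.mem_cons_self)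
            simpa using this
          refine hp' α' ?_ ?_
          · intro y hy
            by_cases hyx : y = x
            · subst hyx; simpa using hα'x
            · rw [Function.update_of_ne hyx]
              exact h1 y fun b' hb' => by
                rcases List.mem_cons.mp hb' with h | h
                · exact hyx (Prod.mk.injEq .. ▸ h).2
                · exact hy b' h
          · refine ⟨Function.update α₀ x d, fun b' y hy => ?_⟩
            have hyx : y ≠ x := fun he => hxQ b' (he ▸ hy)
            rw [h2 b' y (List.mem_cons_of_mem _ hy)]
            simp only [Function.update_of_ne hyx]
      · rintro ⟨s, ⟨hsu, hse⟩, hp⟩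
        have hconst : ∀ β₁ β₂ : V → D, s β₁ x = s β₂ x := fun β₁ β₂ =>
          hse β₁ β₂ x (List.mem_cons_self) fun u hu =>
            absurd (dep_mem (dep_cons_true.mp hu)) (hxQ true)
        set d := s α x with hdd
        refine ⟨d, (ih _).mpr ⟨s, ⟨?_, ?_⟩, ?_⟩⟩
        · exact fun β y hy => hsu β y (List.mem_cons_of_mem _ hy)
        · exact fun β₁ β₂ y hy hag =>
            hse β₁ β₂ y (List.mem_cons_of_mem _ hy) fun u hu =>
              hag u (dep_cons_true.mp hu)
        · rintro α' h1 ⟨α₀, h2⟩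
          refine hp α' ?_ ⟨α₀, ?_⟩
          · intro y hy
            have hyx : y ≠ x := fun he =>
              hy true (he ▸ List.mem_cons_self)
            have := h1 y fun b' hb' => hy b' (List.mem_cons_of_mem _ hb')
            rwa [Function.update_of_ne hyx] at this
          · intro b' y hy
            rcases List.mem_cons.mp hy with h | h
            · have hy2 : y = x := (Prod.mk.injEq .. ▸ h).2
              have hx' := h1 x hxQ
              rw [Function.update_self] at hx'
              rw [hy2, hx', hdd]
              exact hconst α α₀
            · exact h2 b' y h
    | false =>
      constructor
      · intro hS
        choose s' hsk hp using fun d => (ih (Function.update α x d)).mp (hS d)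
        refine ⟨fun β => Function.update (s' (β x) β) x (β x), ⟨?_, ?_⟩, ?_⟩
        · intro β y hy
          rcases List.mem_cons.mp hy with h | h
          · obtain ⟨-, rfl⟩ : False = false ∧ y = x := by
              simpa [Prod.ext_iff] using h
            simp
          · have hyx : y ≠ x := fun he => hxQ false (he ▸ h)
            simp only [Function.update_of_ne hyx]
            exact (hsk (β x)).1 β y h
        · intro β₁ β₂ y hy hag
          have hyQ : (true, y) ∈ Q' := by
            rcases List.mem_cons.mp hy with h | h
            · simp at h
            · exact h
          have hyx : y ≠ x := fun he => hxQ true (he ▸ hyQ)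
          have hx12 : β₁ x = β₂ x :=
            hag x (dep_cons_false.mpr (Or.inl ⟨rfl, hyQ⟩))
          simp only [Function.update_of_ne hyx]
          rw [hx12]
          exact (hsk (β₂ x)).2 β₁ β₂ y hyQ fun u hu =>
            hag u (dep_cons_false.mpr (Or.inr hu))
        · rintro α' h1 ⟨α₀, h2⟩
          have hα'x : α' x = α₀ x := by
            have := h2 false x (List.mem_cons_self)
            simpa using this
          refine hp (α₀ x) α' ?_ ⟨α₀, ?_⟩
          · intro y hy
            by_cases hyx : y = x
            · subst hyx; simpa using hα'x
            · rw [Function.update_of_ne hyx]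
              exact h1 y fun b' hb' => by
                rcases List.mem_cons.mp hb' with h | h
                · exact hyx (Prod.mk.injEq .. ▸ h).2
                · exact hy b' h
          · intro b' y hy
            have hyx : y ≠ x := fun he => hxQ b' (he ▸ hy)
            rw [h2 b' y (List.mem_cons_of_mem _ hy)]
            simp only [Function.update_of_ne hyx]
      · rintro ⟨s, ⟨hsu, hse⟩, hp⟩
        intro d
        refine (ih _).mpr ⟨fun β => s (Function.update β x d), ⟨?_, ?_⟩, ?_⟩
        · intro β y hy
          have hyx : y ≠ x := fun he => hxQ false (he ▸ hy)
          show s (Function.update β x d) y = β y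
          rw [hsu _ y (List.mem_cons_of_mem _ hy), Function.update_of_ne hyx]
        · intro β₁ β₂ y hy hag
          refine hse _ _ y (List.mem_cons_of_mem _ hy) fun u hu => ?_
          by_cases hux : u = x
          · subst hux; simp
          · rw [Function.update_of_ne hux, Function.update_of_ne hux]
            rcases dep_cons_false.mp hu with ⟨rfl, -⟩ | hu'
            · exact absurd rfl hux
            · exact hag u hu'
        · rintro α' h1 ⟨α₀, h2⟩
          refine hp α' ?_ ⟨Function.update α₀ x d, ?_⟩
          · intro y hy
            have hyx : y ≠ x := fun he =>
              hy false (he ▸ List.mem_cons_self)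
            have := h1 y fun b' hb' => hy b' (List.mem_cons_of_mem _ hb')
            rwa [Function.update_of_ne hyx] at this
          · intro b' y hy
            rcases List.mem_cons.mp hy with h | h
            · have hy2 : y = x := (Prod.mk.injEq .. ▸ h).2
              have hx' := h1 x hxQ
              rw [Function.update_self] at hx'
              rw [hy2, hx', hsu _ x (List.mem_cons_self), Function.update_self]
            · exact h2 b' y h
end

section
/- One-binding bisimulation implies satisfaction-invariance for atomic one-binding sentences: if R is a one-binding bisimulation between structures M₁ and M₂ over the same signature, then for every quantification prefix Q and binding prefix β over the arguments of a relation symbol r, M₁ ⊨ Qβr iff M₂ ⊨ Qβr. -/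
open Classical in
/-- `ar[A' ↦ d]`: the partial assignment extending `ar` by giving every
argument in `A'` the value `d`. -/
noncomputable def extAsg {Arg D : Type*} (ar : Arg → Option D) (A' : Set Arg) (d : D) :
    Arg → Option D :=
  fun a => if a ∈ A' then some d else ar a

/-- One-binding bisimulation between two structures (partial assignments are
represented as `Arg → Option D`, their domain being the arguments where they
are defined). -/
def OneBindingBisim {Arg Rel D₁ D₂ : Type*} (arg : Rel → Set Arg)
    (interp₁ : Rel → Set (Arg → Option D₁)) (interp₂ : Rel → Set (Arg → Option D₂))
    (R : (Arg → Option D₁) → (Arg → Option D₂) → Prop) : Prop :=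
  R (fun _ => none) (fun _ => none) ∧
  (∀ ar₁ ar₂, R ar₁ ar₂ → ∀ a, (ar₁ a).isSome ↔ (ar₂ a).isSome) ∧
  (∀ ar₁ ar₂ (A' : Set Arg), R ar₁ ar₂ → (∀ a ∈ A', ar₁ a = none) →
    (∀ d₁ : D₁, ∃ d₂ : D₂, R (extAsg ar₁ A' d₁) (extAsg ar₂ A' d₂)) ∧
    (∀ d₂ : D₂, ∃ d₁ : D₁, R (extAsg ar₁ A' d₁) (extAsg ar₂ A' d₂))) ∧
  (∀ (r : Rel) ar₁ ar₂, R ar₁ ar₂ → (∀ a, (ar₁ a).isSome ↔ a ∈ arg r) →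
    (ar₁ ∈ interp₁ r ↔ ar₂ ∈ interp₂ r))

open Classical in
/-- Partial assignment induced by `β`, `α` restricted to variables in `W`. -/
noncomputable def asgOf {Arg V D : Type*} (β : Arg → Option V) (W : Set V) (α : V → D) :
    Arg → Option D :=
  fun a => (β a).bind (fun v => if v ∈ W then some (α v) else none)

theorem asgOf_ext {Arg V D : Type*} [DecidableEq V] (β : Arg → Option V) (W : Set V)
    (α : V → D) (x : V) (d : D) :
    extAsg (asgOf β W α) {a | β a = some x} d
      = asgOf β (insert x W) (Function.update α x d) := by
  funext a
  cases hb : β a with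
  | none =>
      simp [extAsg, asgOf, hb]
  | some v =>
      by_cases hvx : v = x
      · subst hvx
        simp [extAsg, asgOf, hb]
      · have : ¬ (a ∈ {a | β a = some x}) := by simp [hb, hvx]
        simp only [extAsg, asgOf, hb, if_neg this, Option.bind_some]
        by_cases hvW : v ∈ W
        · simp [hvW, hvx, Function.update_of_ne hvx]
        · simp [hvW, hvx]

theorem stmt_7_aux {Arg V Rel D₁ D₂ : Type*} [DecidableEq V]
    (arg : Rel → Set Arg)
    (interp₁ : Rel → Set (Arg → Option D₁)) (interp₂ : Rel → Set (Arg → Option D₂))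
    (R : (Arg → Option D₁) → (Arg → Option D₂) → Prop)
    (hR : OneBindingBisim arg interp₁ interp₂ R)
    (r : Rel) (β : Arg → Option V)
    (hβdom : ∀ a, (β a).isSome ↔ a ∈ arg r) :
    ∀ (Q : QPrefix V) (W : Set V), (Q.map Prod.snd).Nodup →
      (∀ p ∈ Q, p.2 ∉ W) →
      (∀ a v, β a = some v → (∃ b, (b, v) ∈ Q) ∨ v ∈ W) →
      ∀ (α₁ : V → D₁) (α₂ : V → D₂), R (asgOf β W α₁) (asgOf β W α₂) →
      (evalPrefix (fun α => (fun a => (β a).map α) ∈ interp₁ r) Q α₁ ↔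
       evalPrefix (fun α => (fun a => (β a).map α) ∈ interp₂ r) Q α₂) := by
  intro Q
  induction Q with
  | nil =>
      intro W _ _ hcov α₁ α₂ hRa
      have h1 : asgOf β W α₁ = fun a => (β a).map α₁ := by
        funext a
        cases hb : β a with
        | none => simp [asgOf, hb]
        | some v =>
            have hv : v ∈ W := by
              rcases hcov a v hb with ⟨_, h⟩ | h
              · exact absurd h List.not_mem_nil
              · exact h
            simp [asgOf, hb, hv]
      have h2 : asgOf β W α₂ = fun a => (β a).map α₂ := by
        funext a
        cases hb : β a with
        | none => simp [asgOf, hb]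
        | some v =>
            have hv : v ∈ W := by
              rcases hcov a v hb with ⟨_, h⟩ | h
              · exact absurd h List.not_mem_nil
              · exact h
            simp [asgOf, hb, hv]
      have hdom : ∀ a, ((asgOf β W α₁) a).isSome ↔ a ∈ arg r := by
        intro a
        rw [h1]
        cases hb : β a with
        | none =>
            simp only [hb, Option.map_none, Option.isSome_none, Bool.false_eq_true,
              false_iff]
            intro h
            have := (hβdom a).2 h
            simp [hb] at this
        | some v =>
            simp only [hb, Option.map_some, Option.isSome_some, true_iff]
            exact (hβdom a).1 (by simp [hb])
      have := hR.2.2.2 r _ _ hRa hdom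
      rw [h1, h2] at this
      exact this
  | cons p Q ih =>
      obtain ⟨b, x⟩ := p
      intro W hnd hW hcov α₁ α₂ hRa
      have hnd' : (Q.map Prod.snd).Nodup := (List.nodup_cons.mp hnd).2
      have hxQ : x ∉ Q.map Prod.snd := (List.nodup_cons.mp hnd).1
      have hW' : ∀ p ∈ Q, p.2 ∉ (insert x W : Set V) := by
        intro p hp
        simp only [Set.mem_insert_iff, not_or]
        constructor
        · intro h; exact hxQ (by rw [← h]; exact List.mem_map_of_mem hp)
        · exact hW p (List.mem_cons_of_mem _ hp)
      have hcov' : ∀ a v, β a = some v →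
          (∃ c, (c, v) ∈ Q) ∨ v ∈ (insert x W : Set V) := by
        intro a v hb
        rcases hcov a v hb with ⟨c, hc⟩ | h
        · rcases List.mem_cons.mp hc with h | h
          · right; left; exact (Prod.ext_iff.mp h).2
          · left; exact ⟨c, h⟩
        · right; right; exact h
      have hnone : ∀ a ∈ {a | β a = some x}, asgOf β W α₁ a = none := by
        intro a ha
        have hxW : x ∉ W := hW (b, x) List.mem_cons_self
        simp [asgOf, Set.mem_setOf_eq.mp ha, hxW]
      have hext := hR.2.2.1 _ _ {a | β a = some x} hRa hnone
      have key : ∀ (d₁ : D₁) (d₂ : D₂),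
          R (extAsg (asgOf β W α₁) {a | β a = some x} d₁)
            (extAsg (asgOf β W α₂) {a | β a = some x} d₂) →
          (evalPrefix (fun α => (fun a => (β a).map α) ∈ interp₁ r) Q
              (Function.update α₁ x d₁) ↔
           evalPrefix (fun α => (fun a => (β a).map α) ∈ interp₂ r) Q
              (Function.update α₂ x d₂)) := by
        intro d₁ d₂ h
        rw [asgOf_ext, asgOf_ext] at h
        exact ih (insert x W) hnd' hW' hcov' _ _ h
      cases b with
      | true =>
          constructor
          · rintro ⟨d₁, hd₁⟩
            obtain ⟨d₂, hRd⟩ := hext.1 d₁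
            exact ⟨d₂, (key d₁ d₂ hRd).1 hd₁⟩
          · rintro ⟨d₂, hd₂⟩
            obtain ⟨d₁, hRd⟩ := hext.2 d₂
            exact ⟨d₁, (key d₁ d₂ hRd).2 hd₂⟩
      | false =>
          constructor
          · intro h d₂
            obtain ⟨d₁, hRd⟩ := hext.2 d₂
            exact (key d₁ d₂ hRd).1 (h d₁)
          · intro h d₁
            obtain ⟨d₂, hRd⟩ := hext.1 d₁
            exact (key d₁ d₂ hRd).2 (h d₂)

/-- One-binding bisimilar structures satisfy the same one-binding sentences
`Q β r` (atomic one-binding sentences). -/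
theorem stmt_7 {Arg V Rel D₁ D₂ : Type*} [DecidableEq V]
    (arg : Rel → Set Arg)
    (interp₁ : Rel → Set (Arg → Option D₁)) (interp₂ : Rel → Set (Arg → Option D₂))
    (R : (Arg → Option D₁) → (Arg → Option D₂) → Prop)
    (hR : OneBindingBisim arg interp₁ interp₂ R)
    (r : Rel) (Q : QPrefix V) (hnodup : (Q.map Prod.snd).Nodup)
    (β : Arg → Option V)
    (hβdom : ∀ a, (β a).isSome ↔ a ∈ arg r)
    (hβQ : ∀ a v, β a = some v → ∃ b, (b, v) ∈ Q)
    (α₁ : V → D₁) (α₂ : V → D₂) :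
    evalPrefix (fun α => (fun a => (β a).map α) ∈ interp₁ r) Q α₁ ↔
      evalPrefix (fun α => (fun a => (β a).map α) ∈ interp₂ r) Q α₂ := by
  have hempty : (fun _ => none : Arg → Option D₁) = asgOf β (∅ : Set V) α₁ := by
    funext a; cases hb : β a <;> simp [asgOf, hb]
  have hempty2 : (fun _ => none : Arg → Option D₂) = asgOf β (∅ : Set V) α₂ := by
    funext a; cases hb : β a <;> simp [asgOf, hb]
  have h0 := hR.1
  rw [hempty, hempty2] at h0
  exact stmt_7_aux arg interp₁ interp₂ R hR r β hβdom Q (∅ : Set V) hnodup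
    (by simp) (fun a v hb => Or.inl (hβQ a v hb)) α₁ α₂ h0
end
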